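/- For all integers d ≥ 1 and u ≥ 1, the number of prefix-closed sets S of finite sequences over a d-element alphabet with |S| = u (equivalently, the number of subtrees with exactly u vertices of the infinite rooted d-ary tree that contain the root) is less than (e·d)^u, where e is Euler's number. -/

import Mathlib

open Finset

namespace PCC

lemma list_lt_of_prefix_ne {α : Type*} [LinearOrder α] :
    ∀ {l m : List α}, l <+: m → l ≠ m → l < m := by
  intro l m hp hne
  obtain ⟨t, rfl⟩ := hp
  have ht : t ≠ [] := by rintro rfl; simp at hne
  clear hne
  induction l with
  | nil =>
    cases t with
    | nil => exact absurd rfl ht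
    | cons b t' => exact List.nil_lt_cons b t'
  | cons a l ih =>
    show List.Lex (· < ·) _ _
    exact List.Lex.cons ih

lemma list_le_of_prefix {α : Type*} [LinearOrder α] {l m : List α} (hp : l <+: m) : l ≤ m := by
  rcases eq_or_ne l m with rfl | h
  · exact le_rfl
  · exact (list_lt_of_prefix_ne hp h).le

variable {d u : ℕ}

/-- The `i`-th smallest element of `S`. -/
noncomputable def v (S : Finset (List (Fin d))) (h : S.card = u) (i : Fin u) : List (Fin d) :=
  (S.orderIsoOfFin h i : List (Fin d))

lemma v_mem (S : Finset (List (Fin d))) (h : S.card = u) (i : Fin u) : v S h i ∈ S :=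
  (S.orderIsoOfFin h i).2

lemma v_rank (S : Finset (List (Fin d))) (h : S.card = u) {x : List (Fin d)} (hx : x ∈ S) :
    v S h ((S.orderIsoOfFin h).symm ⟨x, hx⟩) = x := by
  simp [v]

lemma v_lt_iff (S : Finset (List (Fin d))) (h : S.card = u) {i j : Fin u} :
    v S h i < v S h j ↔ i < j := by
  rw [v, v]
  exact Iff.trans Subtype.coe_lt_coe (OrderIso.lt_iff_lt _)

lemma v_le_iff (S : Finset (List (Fin d))) (h : S.card = u) {i j : Fin u} :
    v S h i ≤ v S h j ↔ i ≤ j := by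
  rw [v, v]
  exact Iff.trans Subtype.coe_le_coe (OrderIso.le_iff_le _)

lemma v_inj (S : Finset (List (Fin d))) (h : S.card = u) {i j : Fin u}
    (hij : v S h i = v S h j) : i = j := by
  have := (S.orderIsoOfFin h).injective (Subtype.ext hij)
  exact this

lemma exists_rank (S : Finset (List (Fin d))) (h : S.card = u) {x : List (Fin d)} (hx : x ∈ S) :
    ∃ i, v S h i = x :=
  ⟨(S.orderIsoOfFin h).symm ⟨x, hx⟩, v_rank S h hx⟩

/-- Prefix-closedness predicate. -/
def PC (S : Finset (List (Fin d))) : Prop :=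
  ∀ l ∈ S, ∀ l' : List (Fin d), l' <+: l → l' ∈ S

lemma nil_mem {S : Finset (List (Fin d))} (hP : PC S) (h : S.card = u) (hu : 1 ≤ u) :
    ([] : List (Fin d)) ∈ S := by
  have : S.Nonempty := Finset.card_pos.mp (by omega)
  obtain ⟨l, hl⟩ := this
  exact hP l hl [] (List.nil_prefix)

lemma v_zero {S : Finset (List (Fin d))} (hP : PC S) (h : S.card = u) (hu : 1 ≤ u)
    (i : Fin u) (hi : (i : ℕ) = 0) : v S h i = [] := by
  have hnil := nil_mem hP h hu
  obtain ⟨r, hr⟩ := exists_rank S h hnil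
  have h1 : v S h i ≤ v S h r := (v_le_iff S h).mpr (by omega)
  have h2 : ([] : List (Fin d)) ≤ v S h i := list_le_of_prefix (List.nil_prefix)
  rw [hr] at h1
  exact le_antisymm h1 h2

/-- The encoding of a prefix-closed set: each nonroot vertex is recorded as
(rank of parent, last letter). -/
noncomputable def enc (S : Finset (List (Fin d))) (hP : PC S) (h : S.card = u) :
    Finset (Fin u × Fin d) :=
  (S.erase []).attach.image (fun l =>
    ((S.orderIsoOfFin h).symm
        ⟨l.1.dropLast, hP l.1 (mem_of_mem_erase l.2) _ (List.dropLast_prefix _)⟩,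
     l.1.getLast (ne_of_mem_erase l.2)))

lemma mem_enc_iff {S : Finset (List (Fin d))} (hP : PC S) (h : S.card = u)
    {j : Fin u} {a : Fin d} : (j, a) ∈ enc S hP h ↔ v S h j ++ [a] ∈ S := by
  constructor
  · intro hmem
    obtain ⟨l, hl, hfl⟩ := Finset.mem_image.mp hmem
    have h1 : v S h j = l.1.dropLast := by
      have := congrArg Prod.fst hfl
      simp only at this
      rw [← this, v_rank]
    have h2 : a = l.1.getLast (ne_of_mem_erase l.2) := (congrArg Prod.snd hfl).symm
    rw [h1, h2, List.dropLast_append_getLast (ne_of_mem_erase l.2)]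
    exact mem_of_mem_erase l.2
  · intro hmem
    have hne : v S h j ++ [a] ≠ [] := by simp
    have hmem' : v S h j ++ [a] ∈ S.erase [] := Finset.mem_erase.mpr ⟨hne, hmem⟩
    apply Finset.mem_image.mpr
    refine ⟨⟨_, hmem'⟩, Finset.mem_attach _ _, ?_⟩
    have hdl : (v S h j ++ [a]).dropLast = v S h j := List.dropLast_concat
    have hgl : (v S h j ++ [a]).getLast (ne_of_mem_erase hmem') = a := List.getLast_concat
    rw [Prod.ext_iff]
    refine ⟨?_, hgl⟩
    show (S.orderIsoOfFin h).symm _ = j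
    rw [OrderIso.symm_apply_eq]
    exact Subtype.ext (by simpa [v] using hdl)

lemma enc_card {S : Finset (List (Fin d))} (hP : PC S) (h : S.card = u) (hu : 1 ≤ u) :
    (enc S hP h).card = u - 1 := by
  rw [enc, Finset.card_image_of_injective _ ?inj, Finset.card_attach,
    Finset.card_erase_of_mem (nil_mem hP h hu), h]
  case inj =>
    intro l1 l2 hf
    have h1 : l1.1.dropLast = l2.1.dropLast := by
      have := congrArg Prod.fst hf
      simpa using Subtype.ext_iff.mp ((S.orderIsoOfFin h).symm.injective this)
    have h2 := congrArg Prod.snd hf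
    simp only at h2
    apply Subtype.ext
    rw [← List.dropLast_append_getLast (ne_of_mem_erase l1.2),
      ← List.dropLast_append_getLast (ne_of_mem_erase l2.2), h1, h2]

/-- Candidate set used for reconstruction. -/
noncomputable def cand (E : Finset (Fin u × Fin d)) (f : Fin u → List (Fin d)) (i : Fin u) :
    Finset (List (Fin d)) := by
  classical
  exact ((E.filter (fun p => p.1 < i)).image (fun p => f p.1 ++ [p.2])).filter
    (fun y => ∀ j, j < i → y ≠ f j)

lemma mem_cand {E : Finset (Fin u × Fin d)} {f : Fin u → List (Fin d)} {i : Fin u}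
    {y : List (Fin d)} :
    y ∈ cand E f i ↔ (∃ p ∈ E, p.1 < i ∧ f p.1 ++ [p.2] = y) ∧ ∀ j, j < i → y ≠ f j := by
  classical
  simp [cand, and_assoc]

lemma cand_congr {E : Finset (Fin u × Fin d)} {f g : Fin u → List (Fin d)} {i : Fin u}
    (hfg : ∀ j, j < i → f j = g j) : cand E f i = cand E g i := by
  ext y
  rw [mem_cand, mem_cand]
  constructor
  · rintro ⟨⟨p, hp, hpi, hy⟩, h2⟩
    exact ⟨⟨p, hp, hpi, by rw [← hfg p.1 hpi]; exact hy⟩,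
      fun j hj => by rw [← hfg j hj]; exact h2 j hj⟩
  · rintro ⟨⟨p, hp, hpi, hy⟩, h2⟩
    exact ⟨⟨p, hp, hpi, by rw [hfg p.1 hpi]; exact hy⟩,
      fun j hj => by rw [hfg j hj]; exact h2 j hj⟩

lemma v_mem_cand {S : Finset (List (Fin d))} (hP : PC S) (h : S.card = u) (hu : 1 ≤ u)
    {i : Fin u} (hi : (i : ℕ) ≠ 0) : v S h i ∈ cand (enc S hP h) (v S h) i := by
  have hvne : v S h i ≠ [] := by
    intro hnil
    have h0 : (0 : ℕ) < u := by omega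
    have := v_zero hP h hu ⟨0, h0⟩ rfl
    have := v_inj S h (hnil.trans this.symm)
    apply hi
    rw [this]
  have hpmem : (v S h i).dropLast ∈ S := hP _ (v_mem S h i) _ (List.dropLast_prefix _)
  set j : Fin u := (S.orderIsoOfFin h).symm ⟨(v S h i).dropLast, hpmem⟩ with hj
  have hvj : v S h j = (v S h i).dropLast := v_rank S h hpmem
  set a : Fin d := (v S h i).getLast hvne with ha
  have hdec : v S h j ++ [a] = v S h i := by
    rw [hvj]; exact List.dropLast_append_getLast hvne
  have hji : j < i := by
    rw [← v_lt_iff S h]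
    apply list_lt_of_prefix_ne
    · rw [hvj]; exact List.dropLast_prefix _
    · rw [hvj]
      intro hcontra
      have := congrArg List.length hcontra
      rw [List.length_dropLast] at this
      have : (v S h i).length = 0 := by omega
      exact hvne (List.length_eq_zero_iff.mp this)
  rw [mem_cand]
  refine ⟨⟨(j, a), ?_, hji, hdec⟩, ?_⟩
  · rw [mem_enc_iff hP h, hdec]; exact v_mem S h i
  · intro j' hj' hcontra
    have := v_inj S h hcontra
    rw [← this] at hj'
    exact lt_irrefl _ hj'

lemma cand_lb {S : Finset (List (Fin d))} (hP : PC S) (h : S.card = u)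
    {i : Fin u} {y : List (Fin d)} (hy : y ∈ cand (enc S hP h) (v S h) i) : v S h i ≤ y := by
  rw [mem_cand] at hy
  obtain ⟨⟨p, hp, hpi, hpy⟩, h2⟩ := hy
  have hyS : y ∈ S := by
    rw [← hpy]
    exact (mem_enc_iff hP h).mp hp
  obtain ⟨k, hk⟩ := exists_rank S h hyS
  have hik : i ≤ k := by
    by_contra hlt
    exact h2 k (by omega) hk.symm
  rw [← hk]
  exact (v_le_iff S h).mpr hik

lemma enc_injective {S S' : Finset (List (Fin d))} (hP : PC S) (hP' : PC S')
    (h : S.card = u) (h' : S'.card = u) (hu : 1 ≤ u)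
    (hE : enc S hP h = enc S' hP' h') : S = S' := by
  have key : ∀ n : ℕ, ∀ hn : n < u, v S h ⟨n, hn⟩ = v S' h' ⟨n, hn⟩ := by
    intro n
    induction n using Nat.strong_induction_on with
    | _ n ih =>
      intro hn
      rcases Nat.eq_zero_or_pos n with h0 | hpos
      · rw [v_zero hP h hu ⟨n, hn⟩ h0, v_zero hP' h' hu ⟨n, hn⟩ h0]
      · set i : Fin u := ⟨n, hn⟩ with hidef
        have hC : cand (enc S hP h) (v S h) i = cand (enc S' hP' h') (v S' h') i := by
          rw [hE]
          apply cand_congr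
          intro j hj
          have hjn : (j : ℕ) < n := hj
          have := ih j hjn j.isLt
          simpa using this
        have m1 : v S h i ∈ cand (enc S' hP' h') (v S' h') i := by
          rw [← hC]; exact v_mem_cand hP h hu hpos.ne'
        have m2 : v S' h' i ∈ cand (enc S hP h) (v S h) i := by
          rw [hC]; exact v_mem_cand hP' h' hu hpos.ne'
        exact le_antisymm (cand_lb hP h m2) (cand_lb hP' h' m1)
  ext x
  constructor
  · intro hx
    obtain ⟨i, hi⟩ := exists_rank S h hx
    rw [← hi, show i = (⟨(i : ℕ), i.isLt⟩ : Fin u) from rfl, key i i.isLt]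
    exact v_mem S' h' _
  · intro hx
    obtain ⟨i, hi⟩ := exists_rank S' h' hx
    rw [← hi, show i = (⟨(i : ℕ), i.isLt⟩ : Fin u) from rfl, ← key i i.isLt]
    exact v_mem S h _

end PCC

theorem count_prefix_closed_sets_lt (d u : ℕ) (hd : 1 ≤ d) (hu : 1 ≤ u) :
    {S : Finset (List (Fin d)) | (∀ l ∈ S, ∀ l' : List (Fin d), l' <+: l → l' ∈ S) ∧
        S.card = u}.Finite ∧
      (Nat.card {S : Finset (List (Fin d)) //
          (∀ l ∈ S, ∀ l' : List (Fin d), l' <+: l → l' ∈ S) ∧ S.card = u} : ℝ)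
        < (Real.exp 1 * d) ^ u := by
  classical
  set T := {T : Finset (Fin u × Fin d) // T.card = u - 1}
  let F : {S : Finset (List (Fin d)) //
      (∀ l ∈ S, ∀ l' : List (Fin d), l' <+: l → l' ∈ S) ∧ S.card = u} → T :=
    fun S => ⟨PCC.enc S.1 S.2.1 S.2.2, PCC.enc_card S.2.1 S.2.2 hu⟩
  have hFinj : Function.Injective F := by
    rintro ⟨S, hS⟩ ⟨S', hS'⟩ hFS
    have := Subtype.ext_iff.mp hFS
    exact Subtype.ext (PCC.enc_injective hS.1 hS'.1 hS.2 hS'.2 hu this)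
  have hfin : Finite {S : Finset (List (Fin d)) //
      (∀ l ∈ S, ∀ l' : List (Fin d), l' <+: l → l' ∈ S) ∧ S.card = u} :=
    Finite.of_injective F hFinj
  constructor
  · exact Set.finite_coe_iff.mp hfin
  · have hcard : Nat.card {S : Finset (List (Fin d)) //
        (∀ l ∈ S, ∀ l' : List (Fin d), l' <+: l → l' ∈ S) ∧ S.card = u} ≤
        (u * d).choose (u - 1) := by
      have hle := Nat.card_le_card_of_injective F hFinj
      have hT : Nat.card T = (u * d).choose (u - 1) := by
        simp only [T, Nat.card_eq_fintype_card, Fintype.card_finset_len, Fintype.card_prod,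
          Fintype.card_fin]
      rwa [hT] at hle
    have h1 : ((u * d).choose (u - 1) : ℝ) ≤ ((u * d : ℕ) : ℝ) ^ (u - 1) / (Nat.factorial (u - 1)) :=
      Nat.choose_le_pow_div (u - 1) (u * d)
    have hfactpos : (0 : ℝ) < (Nat.factorial (u - 1)) := by exact_mod_cast Nat.factorial_pos (u - 1)
    have hkey : ((u : ℝ)) ^ (u - 1) / (Nat.factorial (u - 1)) < Real.exp u := by
      have hsum := Real.sum_le_exp_of_nonneg (x := (u : ℝ)) (by positivity) (u + 1)
      have h0 : (1 : ℝ) ≤ ∑ i ∈ Finset.range u, (u : ℝ) ^ i / (Nat.factorial i) := by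
        have := Finset.single_le_sum (f := fun i : ℕ => (u : ℝ) ^ i / (Nat.factorial i))
          (fun i _ => by positivity) (Finset.mem_range.mpr (by omega : 0 < u))
        simpa using this
      rw [Finset.sum_range_succ] at hsum
      have h2 : ((u : ℝ)) ^ u / (Nat.factorial u) < Real.exp u := by linarith
      have heq : ((u : ℝ)) ^ (u - 1) / (Nat.factorial (u - 1)) =
          (u : ℝ) ^ u / (Nat.factorial u) := by
        have hfact : (u : ℝ) * (Nat.factorial (u - 1)) = (Nat.factorial u) := by
          exact_mod_cast Nat.mul_factorial_pred (by omega : u ≠ 0)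
        have hpow : (u : ℝ) ^ u = (u : ℝ) ^ (u - 1) * u := by
          rw [← pow_succ]
          congr 1
          omega
        have hupos : (0 : ℝ) < u := by exact_mod_cast hu
        have hfpos : (0 : ℝ) < (Nat.factorial (u - 1)) := by
          exact_mod_cast Nat.factorial_pos (u - 1)
        rw [hpow, ← hfact]
        field_simp
      rwa [heq]
    have hdpos : (0 : ℝ) < d := by exact_mod_cast hd
    calc (Nat.card {S : Finset (List (Fin d)) //
        (∀ l ∈ S, ∀ l' : List (Fin d), l' <+: l → l' ∈ S) ∧ S.card = u} : ℝ)
        ≤ ((u * d).choose (u - 1) : ℝ) := by exact_mod_cast hcard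
      _ ≤ ((u * d : ℕ) : ℝ) ^ (u - 1) / (Nat.factorial (u - 1)) := h1
      _ = ((u : ℝ) ^ (u - 1) / (Nat.factorial (u - 1))) * (d : ℝ) ^ (u - 1) := by
          push_cast
          rw [mul_pow]
          ring
      _ < Real.exp u * (d : ℝ) ^ (u - 1) := by
          apply mul_lt_mul_of_pos_right hkey
          positivity
      _ ≤ Real.exp u * (d : ℝ) ^ u := by
          apply mul_le_mul_of_nonneg_left _ (Real.exp_pos _).le
          apply pow_le_pow_right₀ (by exact_mod_cast hd)
          omega
      _ = (Real.exp 1 * d) ^ u := by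
          rw [mul_pow, Real.exp_one_pow]
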